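/- Let K be a finite d-dimensional simplicial complex, A ⊆ V a maximum independent set (i.e., |A| = α_d and |A ∩ F| ≤ d for every face F). Then the number of edges between A and A^c = V∖A satisfies |E(A, A^c)| ≥ (|V| − α_d)·d, and consequently α_d ≥ |V|·d/(M_0 + d), where M_0 is the maximum vertex degree (maximum number of edges at a vertex). -/

import Mathlib

lemma stmt15_aux {V : Type*} [DecidableEq V] [Fintype V]
    (K : Finset (Finset V)) (d : ℕ)
    (hdown : ∀ F ∈ K, ∀ G ⊆ F, G ∈ K)
    (A : Finset V) (hA : ∀ F ∈ K, (A ∩ F).card ≤ d)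
    (hAmax : ∀ B : Finset V, (∀ F ∈ K, (B ∩ F).card ≤ d) → B.card ≤ A.card)
    (v : V) (hv : v ∉ A) :
    d ≤ ((K.filter fun e => e.card = 2 ∧ (e ∩ A).card = 1).filter fun e => v ∈ e).card := by
  have h1 : ¬ ∀ F ∈ K, ((insert v A) ∩ F).card ≤ d := by
    intro h
    have := hAmax _ h
    rw [Finset.card_insert_of_notMem hv] at this
    omega
  push_neg at h1
  obtain ⟨F, hFK, hFc⟩ := h1
  have hsub : insert v A ∩ F ⊆ insert v (A ∩ F) := by
    intro x hx
    simp only [Finset.mem_inter, Finset.mem_insert] at hx ⊢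
    tauto
  have h2 := Finset.card_insert_le v (A ∩ F)
  have h3 := hA F hFK
  have h4 := Finset.card_le_card hsub
  have hScard : (A ∩ F).card = d := by omega
  have hvF : v ∈ F := by
    by_contra hvF
    have heq : insert v A ∩ F = A ∩ F := by
      ext x
      simp only [Finset.mem_inter, Finset.mem_insert]
      constructor
      · rintro ⟨rfl | hxA, hxF⟩
        · exact absurd hxF hvF
        · exact ⟨hxA, hxF⟩
      · tauto
    rw [heq, hScard] at hFc
    omega
  rw [← hScard]
  apply Finset.card_le_card_of_injOn (fun a => ({v, a} : Finset V))
  · intro a ha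
    rw [Finset.mem_coe, Finset.mem_inter] at ha
    have hva : v ≠ a := fun h => hv (h ▸ ha.1)
    simp only [Finset.mem_coe, Finset.mem_filter]
    refine ⟨⟨hdown F hFK _ ?_, Finset.card_pair hva, ?_⟩, by simp⟩
    · intro x hx
      simp only [Finset.mem_insert, Finset.mem_singleton] at hx
      rcases hx with rfl | rfl
      · exact hvF
      · exact ha.2
    · have : ({v, a} : Finset V) ∩ A = {a} := by
        ext x
        simp only [Finset.mem_inter, Finset.mem_insert, Finset.mem_singleton]
        constructor
        · rintro ⟨rfl | rfl, hxA⟩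
          · exact absurd hxA hv
          · rfl
        · rintro rfl; exact ⟨Or.inr rfl, ha.1⟩
      rw [this, Finset.card_singleton]
  · intro a ha b hb hab
    have hva : v ≠ a := fun h => hv (h ▸ (Finset.mem_inter.mp ha).1)
    have : a ∈ ({v, b} : Finset V) := by simp only at hab; rw [← hab]; simp
    simp only [Finset.mem_insert, Finset.mem_singleton] at this
    rcases this with rfl | rfl
    · exact absurd rfl hva
    · rfl

/-- For a finite `d`-dimensional simplicial complex and a maximum independent set `A`
(`|A| = α_d`), the number of edges between `A` and `Aᶜ` is at least `(|V| − α_d)·d`, and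
consequently `α_d ≥ |V|·d/(M₀ + d)` where `M₀` is the maximum vertex degree. -/
theorem stmt15 {V : Type*} [DecidableEq V] [Fintype V] [Nonempty V]
    (K : Finset (Finset V)) (d : ℕ) (hd : 1 ≤ d)
    (hdown : ∀ F ∈ K, ∀ G ⊆ F, G ∈ K)
    (hdim : ∀ F ∈ K, F.card ≤ d + 1)
    (A : Finset V) (hA : ∀ F ∈ K, (A ∩ F).card ≤ d)
    (hAmax : ∀ B : Finset V, (∀ F ∈ K, (B ∩ F).card ≤ d) → B.card ≤ A.card)
    (M0 : ℕ)
    (hM0 : IsGreatest {k : ℕ | ∃ v : V, k = (K.filter fun e => e.card = 2 ∧ v ∈ e).card} M0) :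
    (Fintype.card V - A.card) * d ≤
        (K.filter fun e => e.card = 2 ∧ (e ∩ A).card = 1).card ∧
      Fintype.card V * d ≤ A.card * (M0 + d) := by
  set E := K.filter fun e => e.card = 2 ∧ (e ∩ A).card = 1 with hE
  -- Step B: lower bound on cross edges
  have hdisj : ((Aᶜ : Finset V) : Set V).PairwiseDisjoint
      (fun v => E.filter fun e => v ∈ e) := by
    intro v hv w hw hvw
    simp only [Finset.coe_compl, Set.mem_compl_iff, Finset.mem_coe] at hv hw
    simp only [Function.onFun]
    rw [Finset.disjoint_left]
    intro e he he'
    simp only [hE, Finset.mem_filter] at he he'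
    obtain ⟨⟨heK, hcard, hone⟩, hve⟩ := he
    obtain ⟨-, hwe⟩ := he'
    have hsub : ({v, w} : Finset V) ⊆ e := by
      intro x hx
      simp only [Finset.mem_insert, Finset.mem_singleton] at hx
      rcases hx with rfl | rfl <;> assumption
    have : e = {v, w} := by
      symm; apply Finset.eq_of_subset_of_card_le hsub
      rw [Finset.card_pair hvw]; omega
    rw [this] at hone
    have : ({v, w} : Finset V) ∩ A = ∅ := by
      ext x
      simp only [Finset.mem_inter, Finset.mem_insert, Finset.mem_singleton,
        Finset.notMem_empty, iff_false]
      rintro ⟨rfl | rfl, hxA⟩ <;> [exact hv hxA; exact hw hxA]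
    rw [this] at hone
    simp at hone
  have hBsub : (Aᶜ : Finset V).biUnion (fun v => E.filter fun e => v ∈ e) ⊆ E := by
    intro e he
    rw [Finset.mem_biUnion] at he
    obtain ⟨v, -, he⟩ := he
    exact (Finset.mem_filter.mp he).1
  have hB : (Fintype.card V - A.card) * d ≤ E.card := by
    calc (Fintype.card V - A.card) * d = (Aᶜ : Finset V).card * d := by
          rw [Finset.card_compl]
      _ = ∑ _v ∈ (Aᶜ : Finset V), d := by rw [Finset.sum_const, smul_eq_mul]
      _ ≤ ∑ v ∈ (Aᶜ : Finset V), (E.filter fun e => v ∈ e).card := by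
          apply Finset.sum_le_sum
          intro v hv
          rw [Finset.mem_compl] at hv
          exact stmt15_aux K d hdown A hA hAmax v hv
      _ = ((Aᶜ : Finset V).biUnion (fun v => E.filter fun e => v ∈ e)).card :=
          (Finset.card_biUnion hdisj).symm
      _ ≤ E.card := Finset.card_le_card hBsub
  refine ⟨hB, ?_⟩
  -- Step C: upper bound on cross edges
  have hC : E.card ≤ A.card * M0 := by
    have hsub : E ⊆ A.biUnion (fun a => K.filter fun e => e.card = 2 ∧ a ∈ e) := by
      intro e he
      simp only [hE, Finset.mem_filter] at he
      obtain ⟨heK, hcard, hone⟩ := he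
      have : (e ∩ A).Nonempty := by
        rw [← Finset.card_pos, hone]; omega
      obtain ⟨a, ha⟩ := this
      rw [Finset.mem_inter] at ha
      rw [Finset.mem_biUnion]
      exact ⟨a, ha.2, Finset.mem_filter.mpr ⟨heK, hcard, ha.1⟩⟩
    calc E.card ≤ (A.biUnion (fun a => K.filter fun e => e.card = 2 ∧ a ∈ e)).card :=
          Finset.card_le_card hsub
      _ ≤ ∑ a ∈ A, (K.filter fun e => e.card = 2 ∧ a ∈ e).card :=
          Finset.card_biUnion_le
      _ ≤ ∑ _a ∈ A, M0 := by
          apply Finset.sum_le_sum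
          intro a _
          exact hM0.2 ⟨a, rfl⟩
      _ = A.card * M0 := by rw [Finset.sum_const, smul_eq_mul]
  have hAcard : A.card ≤ Fintype.card V := Finset.card_le_univ A
  have : (Fintype.card V - A.card) * d ≤ A.card * M0 := le_trans hB hC
  nlinarith [Nat.sub_add_cancel hAcard]
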